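/- Let Q be an n×n real matrix all of whose complex eigenvalues have strictly negative real part. Then there exists a symmetric positive definite n×n real matrix P such that P·Q + Qᵀ·P = −Id. -/

import Mathlib

open Matrix NormedSpace Set Filter MeasureTheory
open scoped Topology ENNReal NNReal

attribute [local instance] Matrix.linftyOpNormedAddCommGroup Matrix.linftyOpNormedSpace
  Matrix.linftyOpNormedRing Matrix.linftyOpNormedAlgebra

section Aux

variable {n : Type*} [Fintype n] [DecidableEq n]

lemma exp_mulVec_eigen (A : Matrix n n ℂ) (v : n → ℂ) (lam : ℂ)
    (hv : A *ᵥ v = lam • v) : exp A *ᵥ v = Complex.exp lam • v := by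
  have hpow : ∀ k : ℕ, (A ^ k) *ᵥ v = lam ^ k • v := by
    intro k; induction k with
    | zero => simp
    | succ k ih =>
      rw [pow_succ', ← mulVec_mulVec, ih, mulVec_smul, hv, smul_smul, ← pow_succ]
  let L : Matrix n n ℂ →L[ℂ] (n → ℂ) :=
    LinearMap.toContinuousLinearMap
    { toFun := fun M => M *ᵥ v
      map_add' := fun M N => Matrix.add_mulVec M N v
      map_smul' := fun c M => Matrix.smul_mulVec c M v }
  have hsum : Summable fun k : ℕ => (k.factorial : ℂ)⁻¹ • A ^ k := expSeries_summable' A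
  have hsum2 : Summable fun k : ℕ => (k.factorial : ℂ)⁻¹ • lam ^ k := expSeries_summable' lam
  calc exp A *ᵥ v = L (∑' k : ℕ, (k.factorial : ℂ)⁻¹ • A ^ k) := by
        rw [exp_eq_tsum (𝕂 := ℂ)]; rfl
    _ = ∑' k : ℕ, L ((k.factorial : ℂ)⁻¹ • A ^ k) := L.map_tsum hsum
    _ = ∑' k : ℕ, ((k.factorial : ℂ)⁻¹ • lam ^ k) • v := by
        congr 1; funext k
        show ((k.factorial : ℂ)⁻¹ • A ^ k) *ᵥ v = _
        rw [smul_mulVec, hpow k, smul_smul, smul_eq_mul]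
    _ = (∑' k : ℕ, (k.factorial : ℂ)⁻¹ • lam ^ k) • v := hsum2.tsum_smul_const v
    _ = Complex.exp lam • v := by
        rw [show Complex.exp lam = ∑' k : ℕ, (k.factorial : ℂ)⁻¹ • lam ^ k from by
          rw [Complex.exp_eq_exp_ℂ, exp_eq_tsum (𝕂 := ℂ)]]

lemma spectrum_matrix_iff (A : Matrix n n ℂ) (μ : ℂ) :
    μ ∈ spectrum ℂ A ↔ ∃ v ≠ 0, A *ᵥ v = μ • v := by
  rw [spectrum.mem_iff, Algebra.algebraMap_eq_smul_one]
  constructor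
  · intro h
    have hdet : (μ • (1 : Matrix n n ℂ) - A).det = 0 := by
      by_contra hd
      exact h ((Matrix.isUnit_iff_isUnit_det _).mpr (isUnit_iff_ne_zero.mpr hd))
    obtain ⟨v, hv0, hv⟩ := (Matrix.exists_mulVec_eq_zero_iff).mpr hdet
    refine ⟨v, hv0, ?_⟩
    have := sub_mulVec (μ • (1 : Matrix n n ℂ)) A v
    rw [hv] at this
    have h2 : (μ • (1 : Matrix n n ℂ)) *ᵥ v = μ • v := by
      rw [smul_mulVec, one_mulVec]
    rw [h2] at this
    exact (sub_eq_zero.mp this.symm).symm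
  · rintro ⟨v, hv0, hv⟩ hU
    have : (μ • (1 : Matrix n n ℂ) - A) *ᵥ v = 0 := by
      rw [sub_mulVec, smul_mulVec, one_mulVec, hv, sub_self]
    have hdet := Matrix.exists_mulVec_eq_zero_iff.mp ⟨v, hv0, this⟩
    exact (isUnit_iff_ne_zero.mp ((Matrix.isUnit_iff_isUnit_det _).mp hU)) hdet
lemma spectrum_exp_subset (A : Matrix n n ℂ) (μ : ℂ) (hμ : μ ∈ spectrum ℂ (exp A)) :
    ∃ lam ∈ spectrum ℂ A, μ = Complex.exp lam := by
  obtain ⟨w, hw0, hw⟩ := (spectrum_matrix_iff _ μ).mp hμ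
  set E : Submodule ℂ (n → ℂ) := Module.End.eigenspace (Matrix.mulVecLin (exp A)) μ with hE
  have hwE : w ∈ E := by rw [hE, Module.End.mem_eigenspace_iff]; exact hw
  have : Nontrivial E := Submodule.nontrivial_iff_ne_bot.mpr (by
    intro hbot; rw [hbot] at hwE; exact hw0 (Submodule.mem_bot ℂ |>.mp hwE))
  have hcomm : A * exp A = exp A * A := (Commute.refl A).exp_right.eq
  have hmaps : ∀ v ∈ E, (Matrix.mulVecLin A) v ∈ E := by
    intro v hv
    rw [hE, Module.End.mem_eigenspace_iff] at hv ⊢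
    simp only [mulVecLin_apply] at hv ⊢
    rw [mulVec_mulVec, ← hcomm, ← mulVec_mulVec, hv, mulVec_smul]
  let g : Module.End ℂ E := (Matrix.mulVecLin A).restrict hmaps
  obtain ⟨lam, hlam⟩ := Module.End.exists_eigenvalue g
  obtain ⟨w', hw'⟩ := hlam.exists_hasEigenvector
  have hv : A *ᵥ (w' : n → ℂ) = lam • (w' : n → ℂ) := by
    have h1 := Module.End.mem_eigenspace_iff.mp hw'.1
    have h2 : ((g w' : E) : n → ℂ) = A *ᵥ (w' : n → ℂ) := rfl
    rw [h1] at h2; exact h2.symm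
  have hv0 : (w' : n → ℂ) ≠ 0 := fun h => hw'.2 (Subtype.ext h)
  refine ⟨lam, (spectrum_matrix_iff A lam).mpr ⟨_, hv0, hv⟩, ?_⟩
  have h1 := exp_mulVec_eigen A _ lam hv
  have h2 : exp A *ᵥ (w' : n → ℂ) = μ • (w' : n → ℂ) := by
    have := Module.End.mem_eigenspace_iff.mp w'.2
    simpa only [mulVecLin_apply] using this
  rw [h1] at h2
  by_contra hne
  exact hv0 (by
    have := sub_eq_zero.mpr h2
    rw [← sub_smul] at this
    exact (smul_eq_zero.mp this).resolve_left (sub_ne_zero.mpr (fun h => hne h.symm)))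

lemma exists_pow_decay (A : Matrix n n ℂ) (hA : ∀ z ∈ spectrum ℂ A, z.re < 0) :
    ∃ ρ : ℝ, 0 < ρ ∧ ρ < 1 ∧ ∃ C : ℝ, 0 < C ∧ ∀ m : ℕ, ‖exp A ^ m‖ ≤ C * ρ ^ m := by
  set B := exp A with hB
  have hfin := Matrix.finite_spectrum (R := ℂ) A
  -- a bound on norms of elements of the spectrum of B
  set ρ₀ : ℝ≥0 := hfin.toFinset.sup fun z => ‖Real.exp z.re‖₊ with hρ₀
  have hρ₀lt : ρ₀ < 1 := by
    rw [hρ₀, Finset.sup_lt_iff (by norm_num : (⊥ : ℝ≥0) < 1)]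
    intro z hz
    rw [Set.Finite.mem_toFinset] at hz
    have := hA z hz
    rw [← NNReal.coe_lt_coe, coe_nnnorm, Real.norm_eq_abs, abs_of_pos (Real.exp_pos _)]
    simpa using Real.exp_lt_one_iff.mpr this
  have hspec : ∀ μ ∈ spectrum ℂ B, ‖μ‖₊ ≤ ρ₀ := by
    intro μ hμ
    obtain ⟨lam, hlam, rfl⟩ := spectrum_exp_subset A μ hμ
    have : ‖Complex.exp lam‖₊ = ‖Real.exp lam.re‖₊ := by
      ext; simp [Complex.norm_exp, Real.norm_eq_abs, abs_of_pos (Real.exp_pos _)]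
    rw [this, hρ₀]
    exact Finset.le_sup (f := fun z : ℂ => ‖Real.exp z.re‖₊) (Set.Finite.mem_toFinset hfin |>.mpr hlam)
  have hsr : spectralRadius ℂ B ≤ (ρ₀ : ℝ≥0∞) := by
    rw [spectralRadius]
    exact iSup₂_le fun k hk => by exact_mod_cast hspec k hk
  set ρ : ℝ≥0 := (ρ₀ + 1) / 2 with hρ
  have hρ1 : ρ < 1 := by
    rw [hρ]; rw [div_lt_iff₀ (by norm_num)]
    calc ρ₀ + 1 < 1 + 1 := by exact add_lt_add_left hρ₀lt 1
    _ = 1 * 2 := by norm_num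
  have hρpos : 0 < ρ := by positivity
  have hρ₀ρ : (ρ₀ : ℝ≥0∞) < (ρ : ℝ≥0∞) := by
    rw [ENNReal.coe_lt_coe, hρ, lt_div_iff₀ (by norm_num)]
    calc ρ₀ * 2 = ρ₀ + ρ₀ := by ring
    _ < ρ₀ + 1 := by exact add_lt_add_right hρ₀lt ρ₀
  -- Gelfand
  have hg := spectrum.pow_nnnorm_pow_one_div_tendsto_nhds_spectralRadius B
  have hev : ∀ᶠ m : ℕ in atTop, (‖B ^ m‖₊ : ℝ≥0∞) ^ (1 / (m:ℝ)) < (ρ : ℝ≥0∞) :=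
    hg.eventually_lt_const (lt_of_le_of_lt hsr hρ₀ρ)
  obtain ⟨N, hN⟩ := (hev.and (eventually_ge_atTop 1)).exists_forall_of_atTop
  have hbound : ∀ m ≥ N, ‖B ^ m‖₊ ≤ ρ ^ m := by
    intro m hm
    obtain ⟨h1, h2⟩ := hN m hm
    have hm0 : (0:ℝ) < m := by exact_mod_cast h2
    have := (ENNReal.rpow_lt_rpow h1 hm0).le
    rw [← ENNReal.rpow_mul, one_div, inv_mul_cancel₀ (ne_of_gt hm0), ENNReal.rpow_one,
      ENNReal.rpow_natCast] at this
    rw [← ENNReal.coe_pow, ENNReal.coe_le_coe] at this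
    exact this
  -- constant for small m
  set C : ℝ := max 1 ((Finset.range (N+1)).sup' (by simp) fun m => ‖B ^ m‖ / (ρ:ℝ) ^ m) with hC
  refine ⟨ρ, hρpos, hρ1, C, lt_of_lt_of_le one_pos (le_max_left _ _), fun m => ?_⟩
  rcases le_or_gt N m with h | h
  · calc ‖B ^ m‖ ≤ (ρ:ℝ) ^ m := by exact_mod_cast hbound m h
      _ = 1 * (ρ:ℝ) ^ m := (one_mul _).symm
      _ ≤ C * (ρ:ℝ) ^ m := by
          apply mul_le_mul_of_nonneg_right (le_max_left _ _) (by positivity)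
  · have hmem : m ∈ Finset.range (N+1) := Finset.mem_range.mpr (by omega)
    have : ‖B ^ m‖ / (ρ:ℝ) ^ m ≤ C :=
      le_trans (Finset.le_sup' (fun m => ‖B ^ m‖ / (ρ:ℝ) ^ m) hmem) (le_max_right _ _)
    calc ‖B ^ m‖ = (‖B ^ m‖ / (ρ:ℝ) ^ m) * (ρ:ℝ) ^ m := by
          field_simp
      _ ≤ C * (ρ:ℝ) ^ m := mul_le_mul_of_nonneg_right this (by positivity)

lemma norm_map_ofReal (M : Matrix n n ℝ) : ‖M.map (algebraMap ℝ ℂ)‖ = ‖M‖ := by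
  rw [linfty_opNorm_def, linfty_opNorm_def]
  congr 1
  apply Finset.sup_congr rfl
  intro i _
  apply Finset.sum_congr rfl
  intro j _
  simp [Matrix.map_apply]
lemma exp_map_ofReal (M : Matrix n n ℝ) :
    (exp M).map (algebraMap ℝ ℂ) = exp (M.map (algebraMap ℝ ℂ)) := by
  have hc : Continuous ((algebraMap ℝ ℂ).mapMatrix : Matrix n n ℝ →+* Matrix n n ℂ) := by
    show Continuous fun M : Matrix n n ℝ => M.map (algebraMap ℝ ℂ)
    exact Continuous.matrix_map continuous_id Complex.continuous_ofReal
  have h := map_exp ((algebraMap ℝ ℂ).mapMatrix : Matrix n n ℝ →+* Matrix n n ℂ) hc M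
  rw [RingHom.mapMatrix_apply] at h
  exact h
lemma smul_map_ofReal (t : ℝ) (M : Matrix n n ℝ) :
    (t • M).map (algebraMap ℝ ℂ) = t • (M.map (algebraMap ℝ ℂ)) := by
  ext i j; simp [Matrix.map_apply, Complex.ofReal_mul]
lemma exists_exp_decay (Q : Matrix n n ℝ)
    (hQ : ∀ z ∈ spectrum ℂ (Q.map (algebraMap ℝ ℂ)), z.re < 0) :
    ∃ C c : ℝ, 0 < C ∧ 0 < c ∧ ∀ t : ℝ, 0 ≤ t → ‖exp (t • Q)‖ ≤ C * Real.exp (-c * t) := by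
  set A := Q.map (algebraMap ℝ ℂ) with hA
  obtain ⟨ρ, hρ0, hρ1, C₀, hC₀, hpow⟩ := exists_pow_decay A hQ
  obtain ⟨K, hK⟩ := (isCompact_Icc (a := (0:ℝ)) (b := 1)).exists_bound_of_continuousOn
    (f := fun s : ℝ => exp (s • A))
    ((exp_continuous.comp (continuous_id.smul continuous_const)).continuousOn)
  set K' : ℝ := max K 1 with hK'
  have hK'1 : (1:ℝ) ≤ K' := le_max_right _ _
  have hK'0 : (0:ℝ) < K' := lt_of_lt_of_le one_pos hK'1
  set c : ℝ := -Real.log ρ with hc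
  have hc0 : 0 < c := by
    rw [hc, neg_pos]; exact Real.log_neg hρ0 hρ1
  refine ⟨C₀ * K' / ρ, c, by positivity, hc0, fun t ht => ?_⟩
  set m : ℕ := ⌊t⌋₊ with hm
  set s : ℝ := t - m with hs
  have hs0 : 0 ≤ s := by rw [hs]; simp [hm, Nat.floor_le ht]
  have hs1 : s ≤ 1 := by
    rw [hs]; have := Nat.lt_floor_add_one t; linarith
  -- norm equality
  have heq : ‖exp (t • Q)‖ = ‖exp (t • A)‖ := by
    rw [← norm_map_ofReal, exp_map_ofReal, smul_map_ofReal]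
  rw [heq]
  have hsplit : t • A = (m : ℝ) • A + s • A := by
    rw [← add_smul]; congr 1; rw [hs]; ring
  have hcomm : Commute ((m : ℝ) • A) (s • A) := ((Commute.refl A).smul_left _).smul_right _
  have hmul : exp (t • A) = exp A ^ m * exp (s • A) := by
    rw [hsplit, Matrix.exp_add_of_commute _ _ hcomm]
    congr 1
    rw [Nat.cast_smul_eq_nsmul ℝ m A, Matrix.exp_nsmul]
  have hKs : ‖exp (s • A)‖ ≤ K' := le_trans (hK s ⟨hs0, hs1⟩) (le_max_left _ _)
  have hbm : ‖exp A ^ m‖ ≤ C₀ * ρ ^ m := hpow m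
  have hnorm : ‖exp (t • A)‖ ≤ C₀ * ρ ^ m * K' := by
    rw [hmul]
    calc ‖exp A ^ m * exp (s • A)‖ ≤ ‖exp A ^ m‖ * ‖exp (s • A)‖ := norm_mul_le _ _
      _ ≤ (C₀ * ρ ^ m) * K' := by
          apply mul_le_mul hbm hKs (norm_nonneg _) (by positivity)
  refine hnorm.trans ?_
  -- ρ ^ m ≤ ρ ^ (t - 1) as rpow
  have hm1 : t - 1 ≤ (m : ℝ) := by
    have := Nat.lt_floor_add_one t; rw [hm]; linarith
  have h1 : ρ ^ m = ρ ^ ((m : ℝ)) := (Real.rpow_natCast ρ m).symm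
  have h2 : ρ ^ ((m:ℝ)) ≤ ρ ^ (t - 1) := Real.rpow_le_rpow_of_exponent_ge hρ0 hρ1.le hm1
  have h3 : ρ ^ (t - 1) = Real.exp (-c * t) / ρ := by
    rw [Real.rpow_def_of_pos hρ0]
    rw [show Real.log ρ * (t - 1) = (-c * t) - Real.log ρ by rw [hc]; ring]
    rw [Real.exp_sub, Real.exp_log hρ0]
  calc C₀ * ρ ^ m * K' ≤ C₀ * (Real.exp (-c * t) / ρ) * K' := by
        rw [h1]
        have := h2.trans_eq h3
        apply mul_le_mul_of_nonneg_right (mul_le_mul_of_nonneg_left this hC₀.le) hK'0.le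
    _ = C₀ * K' / ρ * Real.exp (-c * t) := by ring

lemma spectrum_transpose (M : Matrix n n ℂ) : spectrum ℂ Mᵀ = spectrum ℂ M := by
  ext z
  rw [spectrum.mem_iff, spectrum.mem_iff, not_iff_not]
  have ha : (algebraMap ℂ (Matrix n n ℂ) z)ᵀ = algebraMap ℂ (Matrix n n ℂ) z := by
    rw [Algebra.algebraMap_eq_smul_one, transpose_smul, transpose_one]
  have h : algebraMap ℂ (Matrix n n ℂ) z - Mᵀ = (algebraMap ℂ (Matrix n n ℂ) z - M)ᵀ := by
    rw [transpose_sub, ha]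
  rw [h, Matrix.isUnit_iff_isUnit_det, Matrix.det_transpose, ← Matrix.isUnit_iff_isUnit_det]

end Aux

/-- Lyapunov equation: if all complex eigenvalues of `Q` have strictly
negative real part, there is a symmetric positive definite matrix `P` with
`P Q + Qᵀ P = -Id`. -/
theorem exists_lyapunov_solution {n : Type*} [Fintype n] [DecidableEq n]
    (Q : Matrix n n ℝ)
    (hQ : ∀ z ∈ spectrum ℂ (Q.map (algebraMap ℝ ℂ)), z.re < 0) :
    ∃ P : Matrix n n ℝ, P.IsSymm ∧ P.PosDef ∧ P * Q + Qᵀ * P = -1 := by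
  obtain ⟨C, c, hC, hc, hdecay⟩ := exists_exp_decay Q hQ
  have hQT : ∀ z ∈ spectrum ℂ (Qᵀ.map (algebraMap ℝ ℂ)), z.re < 0 := by
    intro z hz
    apply hQ
    rwa [Matrix.transpose_map, spectrum_transpose] at hz
  obtain ⟨C', c', hC', hc', hdecay'⟩ := exists_exp_decay Qᵀ hQT
  letI : TopologicalSpace (Matrix n n ℝ) :=
    (Matrix.linftyOpNormedAddCommGroup (m := n) (n := n) (α := ℝ)).toPseudoMetricSpace.toUniformSpace.toTopologicalSpace
  set F : ℝ → Matrix n n ℝ := fun t => exp (t • Qᵀ) * exp (t • Q) with hF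
  have hFcont : Continuous F := by
    apply Continuous.mul
    · exact exp_continuous.comp (continuous_id.smul continuous_const)
    · exact exp_continuous.comp (continuous_id.smul continuous_const)
  have hFnorm : ∀ t : ℝ, 0 ≤ t → ‖F t‖ ≤ C' * C * Real.exp (-(c' + c) * t) := by
    intro t ht
    calc ‖F t‖ ≤ ‖exp (t • Qᵀ)‖ * ‖exp (t • Q)‖ := norm_mul_le _ _
      _ ≤ (C' * Real.exp (-c' * t)) * (C * Real.exp (-c * t)) :=
          mul_le_mul (hdecay' t ht) (hdecay t ht) (norm_nonneg _) (by positivity)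
      _ = C' * C * (Real.exp (-c' * t) * Real.exp (-c * t)) := by ring
      _ = C' * C * Real.exp (-(c' + c) * t) := by rw [← Real.exp_add]; ring_nf
  have hgint : IntegrableOn (fun t => C' * C * Real.exp (-(c' + c) * t)) (Ioi (0:ℝ)) :=
    (exp_neg_integrableOn_Ioi 0 (by positivity)).const_mul _
  have hFint : IntegrableOn F (Ioi (0:ℝ)) := by
    apply Integrable.mono' hgint (hFcont.aestronglyMeasurable.restrict)
    exact (ae_restrict_iff' measurableSet_Ioi).mpr (ae_of_all _ fun t ht => hFnorm t (le_of_lt ht))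
  set P : Matrix n n ℝ := ∫ t in Ioi (0:ℝ), F t with hP
  -- symmetry of each F t
  have hFsymm : ∀ t : ℝ, (F t)ᵀ = F t := by
    intro t
    rw [hF]
    show (exp (t • Qᵀ) * exp (t • Q))ᵀ = _
    erw [transpose_mul, ← Matrix.exp_transpose, ← Matrix.exp_transpose,
      transpose_smul, transpose_smul, transpose_transpose]
    rfl
  -- transpose CLM
  let T : Matrix n n ℝ →L[ℝ] Matrix n n ℝ :=
    LinearMap.toContinuousLinearMap (Matrix.transposeLinearEquiv n n ℝ ℝ).toLinearMap
  have hPsymm : P.IsSymm := by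
    show Pᵀ = P
    have h1 : Pᵀ = T P := rfl
    have h2 : T P = ∫ t in Ioi (0:ℝ), T (F t) := (T.integral_comp_comm hFint).symm
    rw [h1, h2]
    apply MeasureTheory.integral_congr_ae
    exact ae_of_all _ fun t => hFsymm t
  -- positive definiteness
  have hposdef : P.PosDef := by
    rw [posDef_iff_dotProduct_mulVec]
    constructor
    · show Pᴴ = P
      have : Pᴴ = Pᵀ := by
        ext i j; simp [conjTranspose_apply, transpose_apply]
      rw [this]; exact hPsymm
    · intro x hx
      let φ : Matrix n n ℝ →L[ℝ] ℝ :=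
        LinearMap.toContinuousLinearMap
        { toFun := fun M => dotProduct x (M *ᵥ x)
          map_add' := fun M N => by simp [add_mulVec, dotProduct_add]
          map_smul' := fun r M => by simp [smul_mulVec, dotProduct_smul] }
      have hφF : ∀ t : ℝ, φ (F t) = dotProduct (exp (t • Q) *ᵥ x) (exp (t • Q) *ᵥ x) := by
        intro t
        show dotProduct x ((exp (t • Qᵀ) * exp (t • Q)) *ᵥ x) = _
        rw [← Matrix.mulVec_mulVec, Matrix.dotProduct_mulVec x,
          show exp (t • Qᵀ) = (exp (t • Q))ᵀ by
            erw [← transpose_smul, Matrix.exp_transpose]; rfl,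
          Matrix.vecMul_transpose]
      have hφpos : ∀ t : ℝ, 0 < φ (F t) := by
        intro t
        rw [hφF t]
        have hy : exp (t • Q) *ᵥ x ≠ 0 := by
          intro h0
          have hdet : (exp (t • Q)).det = 0 :=
            Matrix.exists_mulVec_eq_zero_iff.mp ⟨x, hx, h0⟩
          have : IsUnit (exp (t • Q)) := Matrix.isUnit_exp (t • Q)
          rw [Matrix.isUnit_iff_isUnit_det, hdet] at this
          exact (by simpa using this : False)
        obtain ⟨i, hi⟩ := Function.ne_iff.mp hy
        apply Finset.sum_pos' (fun j _ => mul_self_nonneg _)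
        exact ⟨i, Finset.mem_univ i, mul_self_pos.mpr hi⟩
      have hstar : star x = x := rfl
      rw [hstar]
      have hPφ : dotProduct x (P *ᵥ x) = φ P := rfl
      rw [hPφ, hP, ← φ.integral_comp_comm hFint]
      -- positivity of the integral
      have hgi : IntegrableOn (fun t => φ (F t)) (Ioi (0:ℝ)) := φ.integrable_comp hFint
      have h01 : (0:ℝ) < ∫ t in (0:ℝ)..1, φ (F t) := by
        apply intervalIntegral.intervalIntegral_pos_of_pos_on
        · exact ((φ.continuous.comp hFcont).intervalIntegrable 0 1)
        · exact fun t _ => hφpos t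
        · norm_num
      have hsub : ∫ t in (0:ℝ)..1, φ (F t) ≤ ∫ t in Ioi (0:ℝ), φ (F t) := by
        rw [intervalIntegral.integral_of_le (by norm_num : (0:ℝ) ≤ 1)]
        apply setIntegral_mono_set hgi
        · exact ae_of_all _ fun t => (hφpos t).le
        · exact HasSubset.Subset.eventuallyLE Ioc_subset_Ioi_self
      linarith
  -- the Lyapunov equation
  have hderiv : ∀ t : ℝ, HasDerivAt F (Qᵀ * F t + F t * Q) t := by
    intro t
    have h1 : HasDerivAt (fun u : ℝ => exp (u • Qᵀ)) (Qᵀ * exp (t • Qᵀ)) t :=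
      hasDerivAt_exp_smul_const' Qᵀ t
    have h2 : HasDerivAt (fun u : ℝ => exp (u • Q)) (exp (t • Q) * Q) t :=
      hasDerivAt_exp_smul_const Q t
    have := h1.mul h2
    have hgoal : Qᵀ * F t + F t * Q =
        Qᵀ * exp (t • Qᵀ) * exp (t • Q) + exp (t • Qᵀ) * (exp (t • Q) * Q) := by
      show Qᵀ * (exp (t • Qᵀ) * exp (t • Q)) + (exp (t • Qᵀ) * exp (t • Q)) * Q = _
      rw [mul_assoc, mul_assoc]
    rw [hgoal]
    exact this
  have hFtop : Tendsto F atTop (𝓝 0) := by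
    have h3 : Tendsto (fun t : ℝ => -(c' + c) * t) atTop atBot := by
      apply Tendsto.const_mul_atTop_of_neg (by linarith : -(c' + c) < 0) tendsto_id
    have hexp : Tendsto (fun t : ℝ => C' * C * Real.exp (-(c' + c) * t)) atTop (𝓝 (C' * C * 0)) := by
      apply Tendsto.const_mul
      have h2 := Real.tendsto_exp_atBot.comp h3
      simpa [Function.comp_def] using h2
    rw [mul_zero] at hexp
    apply squeeze_zero_norm' _ hexp
    filter_upwards [eventually_ge_atTop (0:ℝ)] with t ht
    exact hFnorm t ht
  -- integrability of the derivative
  let L : Matrix n n ℝ →L[ℝ] Matrix n n ℝ :=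
    LinearMap.toContinuousLinearMap
    { toFun := fun M => Qᵀ * M + M * Q
      map_add' := fun M N => by simp [mul_add, add_mul]; abel
      map_smul' := fun r M => by simp [mul_smul_comm, smul_mul_assoc] }
  have hF'int : IntegrableOn (fun t => Qᵀ * F t + F t * Q) (Ioi (0:ℝ)) := by
    have := L.integrable_comp hFint
    exact this
  have key := MeasureTheory.integral_Ioi_of_hasDerivAt_of_tendsto'
      (fun x _ => hderiv x) hF'int hFtop
  have hF0 : F 0 = 1 := by
    show exp ((0:ℝ) • Qᵀ) * exp ((0:ℝ) • Q) = 1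
    rw [zero_smul, zero_smul, exp_zero, one_mul]
  have hLP : (∫ t in Ioi (0:ℝ), (Qᵀ * F t + F t * Q)) = Qᵀ * P + P * Q := by
    have h := L.integral_comp_comm hFint
    exact h
  rw [hLP, hF0, zero_sub] at key
  refine ⟨P, hPsymm, hposdef, ?_⟩
  rw [add_comm] at key
  exact key
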